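/- Let (ν^i) be a sequence of maps ν^i : V_i → Δ⁺ each satisfying the PN axioms with triangle functions τ_i ≥ τ_W and τ_i* ≤ τ_{W*}. Define ν^Σ on V = Π V_i by ν^Σ_p := Σ_{i=1}^∞ 2^{−i} ν^i_{p_i} (pointwise convergent series of distribution functions). Then ν^Σ satisfies: (N1) ν^Σ_p = ε₀ iff p = θ; (N2) ν^Σ_{−p} = ν^Σ_p; (N3) ν^Σ_{p+q} ≥ τ_W(ν^Σ_p, ν^Σ_q); (N4) ν^Σ_p ≤ τ_{W*}(ν^Σ_{αp}, ν^Σ_{(1−α)p}) for all α ∈ [0,1], where τ_W(F,G)(x) = sup_{u+v=x} max(F(u)+G(v)−1, 0) and τ_{W*}(F,G)(x) = inf_{u+v=x} min(F(u)+G(v), 1). -/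
import Mathlib


open scoped ENNReal

noncomputable section

/-- Distribution-type functions on `[0,∞]`. -/
abbrev DF := ℝ≥0∞ → ℝ

/-- The unit step distribution `ε_t`. -/
def stepDF (t : ℝ≥0∞) : DF := fun x => if x ≤ t then 0 else 1

/-- `F` is a distance distribution function: nondecreasing, left-continuous,
`F 0 = 0`, `F ∞ = 1`, with values in `[0,1]`. -/
def IsDDF (F : DF) : Prop :=
  Monotone F ∧ F 0 = 0 ∧ F ⊤ = 1 ∧ (∀ x, F x ∈ Set.Icc (0:ℝ) 1) ∧
    ∀ x : ℝ≥0∞, x ≠ 0 → Filter.Tendsto F (nhdsWithin x (Set.Iio x)) (nhds (F x))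

/-- `τ` is a triangle function: it maps `Δ⁺ × Δ⁺` to `Δ⁺`, is commutative,
associative, nondecreasing in each place, and has `ε₀` as identity. -/
def IsTriangleFn (τ : DF → DF → DF) : Prop :=
  (∀ F G, IsDDF F → IsDDF G → IsDDF (τ F G)) ∧
  (∀ F G, τ F G = τ G F) ∧
  (∀ F G H, τ (τ F G) H = τ F (τ G H)) ∧
  (∀ F G H, F ≤ G → τ F H ≤ τ G H) ∧
  (∀ F, IsDDF F → τ F (stepDF 0) = F)

/-- Membership in `M_b`: `m` is continuous and strictly increasing on `[0,b]`
and maps `[0,b]` onto `[0,∞]`. -/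
def MemMb (b : ℝ≥0∞) (m : ℝ≥0∞ → ℝ≥0∞) : Prop :=
  0 < b ∧ ContinuousOn m (Set.Iic b) ∧ StrictMonoOn m (Set.Iic b) ∧
    m '' Set.Iic b = Set.univ

/-- The `m`-transform `Fm` of `F`: `Fm x = F (m x)` for `x < b`, the left limit
at `x = b` (for finite `b`), and `1` for `x > b`. -/
def mTransform (b : ℝ≥0∞) (m : ℝ≥0∞ → ℝ≥0∞) (F : DF) : DF :=
  if b = ⊤ then fun x => F (m x)
  else fun x =>
    if x < b then F (m x)
    else if x = b then ⨆ y : Set.Iio b, F (m y)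
    else 1

/-- `τ_W(F,G)(x) = sup_{u+v=x} max (F u + G v - 1) 0`. -/
def tauW (F G : DF) : DF :=
  fun x => ⨆ p : {q : ℝ≥0∞ × ℝ≥0∞ // q.1 + q.2 = x},
    max (F p.1.1 + G p.1.2 - 1) 0

/-- `τ_{W*}(F,G)(x) = inf_{u+v=x} min (F u + G v) 1`. -/
def tauWstar (F G : DF) : DF :=
  fun x => ⨅ p : {q : ℝ≥0∞ × ℝ≥0∞ // q.1 + q.2 = x},
    min (F p.1.1 + G p.1.2) 1

/-- The Σ-product `ν^Σ_p := Σ_{i=1}^∞ 2^{-i} ν^i_{p_i}` of a countable family of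
PN spaces with `τ_i ≥ τ_W` and `τ_i* ≤ τ_{W*}` satisfies the PN axioms
(N1)–(N4) with triangle functions `τ_W` and `τ_{W*}`. -/

lemma geo_summable : Summable (fun i : ℕ => (1:ℝ)/2^(i+1)) := by
  have h : Summable (fun i : ℕ => ((1:ℝ)/2)^i * (1/2)) :=
    (summable_geometric_of_lt_one (by norm_num) (by norm_num)).mul_right _
  have e : (fun i : ℕ => ((1:ℝ)/2)^i * (1/2)) = fun i : ℕ => (1:ℝ)/2^(i+1) := by
    funext i; rw [pow_succ, div_pow]; ring
  rwa [e] at h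

lemma geo_sum : ∑' i : ℕ, (1:ℝ)/2^(i+1) = 1 := by
  have h : ∑' i : ℕ, ((1:ℝ)/2)^i * (1/2) = (1-(1/2):ℝ)⁻¹ * (1/2) := by
    rw [tsum_mul_right, tsum_geometric_of_lt_one (by norm_num) (by norm_num)]
  have e : (fun i : ℕ => ((1:ℝ)/2)^i * (1/2)) = fun i : ℕ => (1:ℝ)/2^(i+1) := by
    funext i; rw [pow_succ, div_pow]; ring
  rw [e] at h; rw [h]; norm_num

lemma summable_of_bdd (f : ℕ → ℝ) (h0 : ∀ i, 0 ≤ f i) (h1 : ∀ i, f i ≤ 1) :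
    Summable (fun i => f i / 2^(i+1)) := by
  refine Summable.of_nonneg_of_le (fun i => div_nonneg (h0 i) (by positivity))
    (fun i => ?_) geo_summable
  gcongr
  exact h1 i

lemma tsum_combo (a b : ℕ → ℝ) (ha : Summable (fun i => a i / 2^(i+1)))
    (hb : Summable (fun i => b i / 2^(i+1))) :
    ∑' i : ℕ, (a i + b i - 1)/2^(i+1)
      = (∑' i : ℕ, a i/2^(i+1)) + (∑' i : ℕ, b i/2^(i+1)) - 1 := by
  have h1 : (fun i : ℕ => (a i + b i - 1)/2^(i+1))
      = fun i : ℕ => (a i/2^(i+1) + b i/2^(i+1)) - 1/2^(i+1) := by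
    funext i; ring
  rw [h1, Summable.tsum_sub (ha.add hb) geo_summable, Summable.tsum_add ha hb, geo_sum]

theorem sigma_product_is_Menger_under_W
    (V : ℕ → Type*) [∀ i, AddCommGroup (V i)] [∀ i, Module ℝ (V i)]
    (ν : ∀ i, V i → DF) (hν : ∀ i v, IsDDF (ν i v))
    (τ τs : ℕ → DF → DF → DF)
    (hτ : ∀ i, IsTriangleFn (τ i)) (hτs : ∀ i, IsTriangleFn (τs i))
    (hτW : ∀ i F G, IsDDF F → IsDDF G → tauW F G ≤ τ i F G)
    (hτsW : ∀ i F G, IsDDF F → IsDDF G → τs i F G ≤ tauWstar F G)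
    (hN1 : ∀ i v, ν i v = stepDF 0 ↔ v = 0)
    (hN2 : ∀ i v, ν i (-v) = ν i v)
    (hN3 : ∀ i v w, τ i (ν i v) (ν i w) ≤ ν i (v + w))
    (hN4 : ∀ i, ∀ α ∈ Set.Icc (0:ℝ) 1, ∀ v : V i,
      ν i v ≤ τs i (ν i (α • v)) (ν i ((1 - α) • v))) :
    let νS : (∀ i, V i) → DF := fun p x => ∑' i : ℕ, ν i (p i) x / 2 ^ (i + 1)
    (∀ p, νS p = stepDF 0 ↔ p = 0) ∧
    (∀ p, νS (-p) = νS p) ∧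
    (∀ p q, tauW (νS p) (νS q) ≤ νS (p + q)) ∧
    (∀ α ∈ Set.Icc (0:ℝ) 1, ∀ p,
      νS p ≤ tauWstar (νS (α • p)) (νS ((1 - α) • p))) := by
  intro νS
  have hbd : ∀ i (v : V i) x, ν i v x ∈ Set.Icc (0:ℝ) 1 := fun i v x => (hν i v).2.2.2.1 x
  have hsum : ∀ (p : ∀ i, V i) x, Summable (fun i => ν i (p i) x / 2^(i+1)) := fun p x =>
    summable_of_bdd _ (fun i => (hbd i _ x).1) (fun i => (hbd i _ x).2)
  refine ⟨?_, ?_, ?_, ?_⟩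
  · -- N1
    intro p
    constructor
    · intro h
      funext i
      refine (hN1 i (p i)).1 ?_
      funext x
      by_cases hx : x = 0
      · subst hx
        simpa [stepDF] using (hν i (p i)).2.1
      · have hx1 : νS p x = 1 := by
          rw [h]; simp [stepDF, le_zero_iff, hx]
        have hs1 : stepDF 0 x = 1 := by simp [stepDF, le_zero_iff, hx]
        rw [hs1]
        by_contra hne
        have hlt : ν i (p i) x < 1 := lt_of_le_of_ne (hbd i (p i) x).2 hne
        have hstrict : ∑' j : ℕ, ν j (p j) x / 2^(j+1) < ∑' j : ℕ, (1:ℝ)/2^(j+1) := by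
          refine Summable.tsum_lt_tsum (i := i) (fun j => ?_) ?_ (hsum p x) geo_summable
          · gcongr; exact (hbd j (p j) x).2
          · have hc : (0:ℝ) < 2^(i+1) := by positivity
            exact (div_lt_div_iff_of_pos_right hc).mpr hlt
        rw [geo_sum] at hstrict
        exact absurd hx1 (ne_of_lt hstrict)
    · intro h
      subst h
      funext x
      have e : ∀ i : ℕ, ν i ((0 : ∀ i, V i) i) x = stepDF 0 x := fun i => by
        rw [show ((0 : ∀ i, V i) i) = (0 : V i) from rfl, (hN1 i 0).2 rfl]
      show ∑' i : ℕ, ν i ((0 : ∀ i, V i) i) x / 2^(i+1) = stepDF 0 x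
      simp only [e]
      by_cases hx : x = 0
      · subst hx; simp [stepDF]
      · simp only [stepDF, le_zero_iff, hx, if_false]
        simpa using geo_sum
  · -- N2
    intro p
    funext x
    show ∑' i : ℕ, ν i ((-p) i) x / 2^(i+1) = ∑' i : ℕ, ν i (p i) x / 2^(i+1)
    congr 1
    funext i
    rw [show ((-p) i) = -(p i) from rfl, hN2]
  · -- N3
    intro p q x
    have h0 : (0:ℝ) ≤ νS (p + q) x :=
      tsum_nonneg fun i => div_nonneg (hbd i _ x).1 (by positivity)
    refine Real.iSup_le ?_ h0
    rintro ⟨⟨u, v⟩, huv⟩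
    refine max_le ?_ h0
    have per : ∀ i : ℕ, (ν i (p i) u + ν i (q i) v - 1)/2^(i+1)
        ≤ ν i (p i + q i) x / 2^(i+1) := by
      intro i
      have hb : BddAbove (Set.range fun pr : {q : ℝ≥0∞ × ℝ≥0∞ // q.1 + q.2 = x} =>
          max (ν i (p i) pr.1.1 + ν i (q i) pr.1.2 - 1) 0) := by
        refine ⟨1, ?_⟩
        rintro _ ⟨pr, rfl⟩
        refine max_le ?_ zero_le_one
        have h1 := (hbd i (p i) pr.1.1).2
        have h2 := (hbd i (q i) pr.1.2).2
        linarith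
      have h1 : max (ν i (p i) u + ν i (q i) v - 1) 0
          ≤ tauW (ν i (p i)) (ν i (q i)) x := le_ciSup hb ⟨(u, v), huv⟩
      have h2 := hτW i _ _ (hν i (p i)) (hν i (q i)) x
      have h3 := hN3 i (p i) (q i) x
      have h4 : ν i (p i) u + ν i (q i) v - 1 ≤ ν i (p i + q i) x :=
        le_trans (le_max_left _ _) (h1.trans (h2.trans h3))
      gcongr
    have hsL : Summable (fun i : ℕ => (ν i (p i) u + ν i (q i) v - 1)/2^(i+1)) := by
      have h := ((hsum p u).add (hsum q v)).sub geo_summable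
      refine h.congr fun i => ?_
      ring
    calc νS p u + νS q v - 1
        = ∑' i : ℕ, (ν i (p i) u + ν i (q i) v - 1)/2^(i+1) :=
          (tsum_combo _ _ (hsum p u) (hsum q v)).symm
      _ ≤ ∑' i : ℕ, ν i (p i + q i) x / 2^(i+1) := Summable.tsum_le_tsum per hsL (hsum (p + q) x)
      _ = νS (p + q) x := rfl
  · -- N4
    intro α hα p x
    haveI : Nonempty {q : ℝ≥0∞ × ℝ≥0∞ // q.1 + q.2 = x} := ⟨⟨(x, 0), by simp⟩⟩
    refine le_ciInf ?_
    rintro ⟨⟨u, v⟩, huv⟩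
    refine le_min ?_ ?_
    · have per : ∀ i : ℕ, ν i (p i) x / 2^(i+1)
          ≤ (ν i (α • p i) u + ν i ((1 - α) • p i) v)/2^(i+1) := by
        intro i
        have h1 := hN4 i α hα (p i) x
        have h2 := hτsW i _ _ (hν i (α • p i)) (hν i ((1 - α) • p i)) x
        have hbb : BddBelow (Set.range fun pr : {q : ℝ≥0∞ × ℝ≥0∞ // q.1 + q.2 = x} =>
            min (ν i (α • p i) pr.1.1 + ν i ((1 - α) • p i) pr.1.2) 1) := by
          refine ⟨0, ?_⟩
          rintro _ ⟨pr, rfl⟩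
          exact le_min (add_nonneg (hbd i _ _).1 (hbd i _ _).1) zero_le_one
        have h3 : tauWstar (ν i (α • p i)) (ν i ((1 - α) • p i)) x
            ≤ min (ν i (α • p i) u + ν i ((1 - α) • p i) v) 1 := ciInf_le hbb ⟨(u, v), huv⟩
        have h4 : ν i (p i) x ≤ ν i (α • p i) u + ν i ((1 - α) • p i) v :=
          le_trans (h1.trans (h2.trans h3)) (min_le_left _ _)
        gcongr
      have hadd : Summable (fun i : ℕ =>
          (ν i (α • p i) u + ν i ((1 - α) • p i) v)/2^(i+1)) := by
        have h := (hsum (α • p) u).add (hsum ((1 - α) • p) v)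
        refine h.congr fun i => ?_
        show ν i ((α • p) i) u / 2^(i+1) + ν i (((1 - α) • p) i) v / 2^(i+1) = _
        rw [show ((α • p) i) = α • p i from rfl,
          show (((1 - α) • p) i) = (1 - α) • p i from rfl]
        ring
      calc νS p x ≤ ∑' i : ℕ, (ν i (α • p i) u + ν i ((1 - α) • p i) v)/2^(i+1) :=
            Summable.tsum_le_tsum per (hsum p x) hadd
        _ = νS (α • p) u + νS ((1 - α) • p) v := by
            rw [← Summable.tsum_add (hsum (α • p) u) (hsum ((1 - α) • p) v)]
            congr 1
            funext i
            show _ = ν i ((α • p) i) u / 2^(i+1) + ν i (((1 - α) • p) i) v / 2^(i+1)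
            rw [show ((α • p) i) = α • p i from rfl,
              show (((1 - α) • p) i) = (1 - α) • p i from rfl]
            ring
    · have hle : ∀ i : ℕ, ν i (p i) x / 2^(i+1) ≤ (1:ℝ)/2^(i+1) := fun i => by
        gcongr; exact (hbd i _ x).2
      have := Summable.tsum_le_tsum hle (hsum p x) geo_summable
      rw [geo_sum] at this
      exact this
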